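/- Let σ be a type and let f ∈ MvPolynomial σ (ZMod 2) be homogeneous of degree d. Then MvPolynomial.homogeneousComponent (d + 1) (Sq f) = Q_0 f, i.e. the first Steenrod square Sq¹ acts on 𝔽₂[x_j : j ∈ σ] as the Milnor derivation Q_0 (the derivation sending each variable to its square). -/

import Mathlib

open MvPolynomial

/-- The `i`-th Milnor derivation `Q_i` on `𝔽₂[x_j : j ∈ σ]`: the unique
`𝔽₂`-linear derivation with `Q_i (X j) = (X j) ^ (2 ^ (i + 1))`. -/
noncomputable def Q (σ : Type*) (i : ℕ) :
    MvPolynomial σ (ZMod 2) →ₗ[ZMod 2] MvPolynomial σ (ZMod 2) :=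
  (MvPolynomial.mkDerivation (ZMod 2)
    fun j => (MvPolynomial.X j : MvPolynomial σ (ZMod 2)) ^ (2 ^ (i + 1))).toLinearMap

/-- The total Steenrod square: the `𝔽₂`-algebra endomorphism sending
each variable `X j` to `X j + (X j)²`. -/
noncomputable def Sq (σ : Type*) :
    MvPolynomial σ (ZMod 2) →ₐ[ZMod 2] MvPolynomial σ (ZMod 2) :=
  MvPolynomial.aeval fun j => MvPolynomial.X j + (MvPolynomial.X j) ^ 2

/-- The "generic" total square, with the square part marked by the
polynomial variable `t`. -/
noncomputable def psi (σ : Type*) :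
    MvPolynomial σ (ZMod 2) →ₐ[ZMod 2] Polynomial (MvPolynomial σ (ZMod 2)) :=
  MvPolynomial.aeval fun j =>
    Polynomial.C (MvPolynomial.X j) + Polynomial.C (MvPolynomial.X j ^ 2) * Polynomial.X

theorem psi_coeff_zero (σ : Type*) (f : MvPolynomial σ (ZMod 2)) :
    (psi σ f).coeff 0 = f := by
  have h : ((Polynomial.aeval (0 : MvPolynomial σ (ZMod 2))).restrictScalars
      (ZMod 2)).comp (psi σ) = AlgHom.id _ _ := by
    apply MvPolynomial.algHom_ext; intro j; simp [psi]
  have h2 := DFunLike.congr_fun h f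
  simp only [AlgHom.comp_apply, AlgHom.coe_restrictScalars', AlgHom.id_apply] at h2
  rw [Polynomial.coeff_zero_eq_eval_zero, ← Polynomial.coe_aeval_eq_eval, h2]

theorem psi_coeff_one (σ : Type*) (f : MvPolynomial σ (ZMod 2)) :
    (psi σ f).coeff 1 = Q σ 0 f := by
  induction f using MvPolynomial.induction_on with
  | C a =>
    have : Q σ 0 (MvPolynomial.C a) = 0 := by
      rw [show (MvPolynomial.C a : MvPolynomial σ (ZMod 2)) =
        algebraMap (ZMod 2) _ a from rfl]
      exact Derivation.map_algebraMap _ a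
    simp [psi, this, MvPolynomial.algebraMap_eq]
  | add p q hp hq => simp [map_add, hp, hq]
  | mul_X p j hp =>
    have hQ : Q σ 0 (p * MvPolynomial.X j) =
        p * (MvPolynomial.X j) ^ 2 + MvPolynomial.X j * Q σ 0 p := by
      show (MvPolynomial.mkDerivation (ZMod 2) _) (p * MvPolynomial.X j) = _
      rw [Derivation.leibniz]
      simp [MvPolynomial.mkDerivation_X, smul_eq_mul]
      ring_nf
      rfl
    rw [map_mul, hQ]
    have : psi σ (MvPolynomial.X j) =
        Polynomial.C (MvPolynomial.X j) + Polynomial.C (MvPolynomial.X j ^ 2) * Polynomial.X := by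
      simp [psi]
    rw [this]
    rw [mul_add, ← mul_assoc, Polynomial.coeff_add]
    rw [Polynomial.coeff_mul_C]
    rw [show (1 : ℕ) = 0 + 1 from rfl, Polynomial.coeff_mul_X, Polynomial.coeff_mul_C]
    rw [psi_coeff_zero, hp]
    ring

theorem psi_X_pow_coeff (σ : Type*) (a : σ) (n k : ℕ) :
    ((psi σ (MvPolynomial.X a ^ n)).coeff k).IsHomogeneous (n + k) := by
  induction n generalizing k with
  | zero =>
    rcases Nat.eq_zero_or_pos k with hk | hk
    · subst hk; simpa using MvPolynomial.isHomogeneous_one σ (ZMod 2)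
    · simp only [pow_zero, map_one]
      rw [Polynomial.coeff_one, if_neg (by omega)]
      exact MvPolynomial.isHomogeneous_zero _ _ _
  | succ n ih =>
    rw [pow_succ, map_mul]
    have hpsiX : psi σ (MvPolynomial.X a) =
        Polynomial.C (MvPolynomial.X a) + Polynomial.C (MvPolynomial.X a ^ 2) * Polynomial.X := by
      simp [psi]
    rw [hpsiX, mul_add, ← mul_assoc, Polynomial.coeff_add, Polynomial.coeff_mul_C]
    rcases k with _ | k
    · rw [Polynomial.coeff_mul_X_zero, add_zero]
      have := (ih 0).mul (MvPolynomial.isHomogeneous_X (ZMod 2) a)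
      simpa using this
    · rw [Polynomial.coeff_mul_X, Polynomial.coeff_mul_C]
      have h1 := (ih (k+1)).mul (MvPolynomial.isHomogeneous_X (ZMod 2) a)
      have h2 := (ih k).mul (MvPolynomial.isHomogeneous_X_pow (R := ZMod 2) a 2)
      have e1 : n + (k+1) + 1 = n + 1 + (k+1) := by omega
      have e2 : n + k + 2 = n + 1 + (k+1) := by omega
      exact (e1 ▸ h1).add (e2 ▸ h2)

theorem psi_coeff_isHomogeneous (σ : Type*) (d : ℕ) (f : MvPolynomial σ (ZMod 2))
    (hf : f.IsHomogeneous d) (k : ℕ) :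
    ((psi σ f).coeff k).IsHomogeneous (d + k) := by
  rw [← MvPolynomial.mem_homogeneousSubmodule]
  -- reduce to monomials
  rw [← MvPolynomial.support_sum_monomial_coeff f, map_sum]
  simp only [Polynomial.finset_sum_coeff]
  apply Submodule.sum_mem
  intro m hm
  have hdeg : m.degree = d := by
    have := hf (MvPolynomial.mem_support_iff.mp hm)
    rw [Finsupp.degree_eq_weight_one]; exact this
  have hmono : MvPolynomial.monomial m (MvPolynomial.coeff m f) =
      (MvPolynomial.coeff m f) • MvPolynomial.monomial m 1 := by
    rw [smul_monomial, smul_eq_mul, mul_one]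
  rw [hmono, map_smul, Polynomial.coeff_smul]
  apply Submodule.smul_mem
  rw [MvPolynomial.mem_homogeneousSubmodule]
  -- now monomial m 1 with m.degree = d; induct on m
  clear hmono hm hf f
  subst hdeg
  induction m using Finsupp.induction generalizing k with
  | zero =>
    simp only [MvPolynomial.monomial_zero', map_one, map_zero, zero_add]
    rcases Nat.eq_zero_or_pos k with hk | hk
    · subst hk
      rw [Polynomial.coeff_one, if_pos rfl]
      simpa using MvPolynomial.isHomogeneous_one σ (ZMod 2)
    · rw [Polynomial.coeff_one, if_neg (by omega)]
      exact MvPolynomial.isHomogeneous_zero _ _ _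
  | single_add a b m ha hb ih =>
    rw [MvPolynomial.monomial_single_add, map_mul, map_pow]
    have hdeg : (Finsupp.single a b + m).degree = b + m.degree := by
      simp only [Finsupp.degree_eq_weight_one, map_add]
      congr 1
      simp [Finsupp.weight_apply, Finsupp.sum_single_index]
    rw [hdeg, Polynomial.coeff_mul]
    apply MvPolynomial.IsHomogeneous.sum
    intro p hp
    rw [Finset.HasAntidiagonal.mem_antidiagonal] at hp
    have h1 := psi_X_pow_coeff σ a b p.1
    have h2 := ih p.2
    have := h1.mul h2
    have e : b + p.1 + (m.degree + p.2) = b + m.degree + k := by omega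
    rw [← map_pow]
    exact e ▸ this

theorem sq_one_eq_Q_zero (σ : Type*) (d : ℕ) (f : MvPolynomial σ (ZMod 2))
    (hf : f.IsHomogeneous d) :
    MvPolynomial.homogeneousComponent (d + 1) (Sq σ f) = Q σ 0 f := by
  classical
  have hcomp : ((Polynomial.aeval (1 : MvPolynomial σ (ZMod 2))).restrictScalars
      (ZMod 2)).comp (psi σ) = Sq σ := by
    apply MvPolynomial.algHom_ext; intro j; simp [psi, Sq]
  have hSq : Sq σ f = Polynomial.eval 1 (psi σ f) := by
    rw [← hcomp]
    simp only [AlgHom.comp_apply, AlgHom.coe_restrictScalars']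
    rw [← Polynomial.coe_aeval_eq_eval]
  rw [hSq, Polynomial.eval_eq_sum, Polynomial.sum]
  simp only [one_pow, mul_one]
  rw [map_sum]
  have hterm : ∀ k ∈ (psi σ f).support,
      MvPolynomial.homogeneousComponent (d + 1) ((psi σ f).coeff k) =
        if k = 1 then (psi σ f).coeff k else 0 := by
    intro k _
    rw [MvPolynomial.homogeneousComponent_of_mem
      ((MvPolynomial.mem_homogeneousSubmodule _ _).mpr (psi_coeff_isHomogeneous σ d f hf k))]
    by_cases h : k = 1
    · subst h; simp
    · rw [if_neg (by omega), if_neg h]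
  rw [Finset.sum_congr rfl hterm, Finset.sum_ite_eq' _ 1 _, ← psi_coeff_one σ f]
  split_ifs with h
  · rfl
  · exact (Polynomial.notMem_support_iff.mp h).symm
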